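/- arXiv:2209.04647 — 3 statements merged into one kernel-verified Lean document; each statement's English description precedes it below -/
import Mathlib

section
/- Let A ⊆ ℤ and let χ be a coloring of A such that every 3-term arithmetic progression in A is rainbow. Suppose pairs (x₁,y₁),...,(x_s,y_s) of integers satisfy x_i + y_i ∈ A for all i, x_i − y_i = x_j − y_j for all i,j, and χ(x_i + y_i) = χ(x_j + y_j) for all i,j. Then for any indices s ≠ t with x_s + y_t ∈ A we get a contradiction; equivalently, x_s + y_t ∈ A if and only if s = t. -/
/-- If every 3-AP in `A ⊆ ℤ` is rainbow under `χ`, and distinct pairs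
`(x i, y i)` all have sums in `A`, equal differences, and equal colors of sums,
then `x s + y t ∈ A ↔ s = t`. -/
theorem stmt_1 {ι : Type*} (A : Set ℤ) (χ : ℤ → ℕ)
    (hrainbow : ∀ a c b : ℤ, a ∈ A → c ∈ A → b ∈ A → a ≠ b → a + b = 2 * c →
      χ a ≠ χ c ∧ χ a ≠ χ b ∧ χ c ≠ χ b)
    (x y : ι → ℤ)
    (hinj : Function.Injective (fun i => (x i, y i)))
    (hsum : ∀ i, x i + y i ∈ A)
    (hdiff : ∀ i j, x i - y i = x j - y j)
    (hcolor : ∀ i j, χ (x i + y i) = χ (x j + y j)) :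
    ∀ s t, x s + y t ∈ A ↔ s = t := by
  intro s t
  constructor
  · intro hmem
    by_contra hne
    have hd := hdiff s t
    have hne2 : x s + y s ≠ x t + y t := by
      intro h
      apply hne
      apply hinj
      have hx : x s = x t := by linarith
      have hy : y s = y t := by linarith
      simp [hx, hy]
    have hmid : (x s + y s) + (x t + y t) = 2 * (x s + y t) := by linarith
    exact (hrainbow _ _ _ (hsum s) hmem (hsum t) hne2 hmid).2.1 (hcolor s t)
  · rintro rfl
    exact hsum s
end

section
/- With Ψ as above, if (x₁,y₁) ≠ (x₂,y₂) satisfy Ψ(x₁,y₁) = Ψ(x₂,y₂), then x₁+y₂ ∉ A and x₂+y₁ ∉ A. -/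
/-- If `Ψ(x,y) = (x - y, χ(x+y))` takes the same value on two distinct pairs
in `[m] × [m]` whose sums lie in `A` (where every 3-AP of `A` is rainbow
under `χ`), then `x₁ + y₂ ∉ A` and `x₂ + y₁ ∉ A`. -/
theorem stmt_9 (m : ℕ) (A : Finset ℕ) (χ : ℕ → ℕ)
    (hA : A ⊆ Finset.Icc 1 (2 * m))
    (hrainbow : ∀ a c b : ℕ, a ∈ A → c ∈ A → b ∈ A → a ≠ b → a + b = 2 * c →
      χ a ≠ χ c ∧ χ a ≠ χ b ∧ χ c ≠ χ b)
    (x₁ y₁ x₂ y₂ : ℕ)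
    (hx₁ : x₁ ∈ Finset.Icc 1 m) (hy₁ : y₁ ∈ Finset.Icc 1 m)
    (hx₂ : x₂ ∈ Finset.Icc 1 m) (hy₂ : y₂ ∈ Finset.Icc 1 m)
    (hs₁ : x₁ + y₁ ∈ A) (hs₂ : x₂ + y₂ ∈ A)
    (hne : (x₁, y₁) ≠ (x₂, y₂))
    (hΨ : ((x₁ : ℤ) - (y₁ : ℤ), χ (x₁ + y₁)) = ((x₂ : ℤ) - (y₂ : ℤ), χ (x₂ + y₂))) :
    x₁ + y₂ ∉ A ∧ x₂ + y₁ ∉ A := by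
  obtain ⟨hd, hχ⟩ := Prod.mk.injEq .. ▸ hΨ
  have hmid : x₂ + y₁ = x₁ + y₂ := by omega
  have hsne : x₁ + y₁ ≠ x₂ + y₂ := by
    intro h
    exact hne (by rw [Prod.mk.injEq]; omega)
  have key : x₁ + y₂ ∉ A := by
    intro hmem
    have hap : (x₁ + y₁) + (x₂ + y₂) = 2 * (x₁ + y₂) := by omega
    exact (hrainbow _ _ _ hs₁ hmem hs₂ hsne hap).2.1 hχ
  exact ⟨key, hmid ▸ key⟩
end

section
/- There does not exist, for any 0 < α < 1 and constant C, an infinite family of sets A_n ⊆ [n] with |A_n| ≥ n − n^α admitting colorings with at most C colors such that every 3-term arithmetic progression in A_n is rainbow. -/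
open Filter

/-- For `0 < α < 1` and a constant `C`, there is no infinite family of sets
`Aₙ ⊆ [n]` with `|Aₙ| ≥ n - n^α`, colored with at most `C` colors such that
every 3-AP in `Aₙ` is rainbow. -/
theorem stmt_11 (α : ℝ) (hα0 : 0 < α) (hα1 : α < 1) (C : ℕ) :
    ¬ ∃ (A : ℕ → Finset ℕ) (χ : ℕ → ℕ → ℕ),
      {n : ℕ |
        A n ⊆ Finset.Icc 1 n ∧
        (n : ℝ) - (n : ℝ) ^ α ≤ ((A n).card : ℝ) ∧
        ((A n).image (χ n)).card ≤ C ∧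
        (∀ x d : ℕ, 1 ≤ d → x ∈ A n → x + d ∈ A n → x + 2 * d ∈ A n →
          χ n x ≠ χ n (x + d) ∧ χ n x ≠ χ n (x + 2 * d) ∧
            χ n (x + d) ≠ χ n (x + 2 * d))}.Infinite := by
  rintro ⟨A, χ, hinf⟩
  -- Analytic step: eventually `2(C+1)(x^α+2)+1 < x`.
  have key : ∀ᶠ (x : ℝ) in atTop, 2 * ((C : ℝ) + 1) * (x ^ α + 2) + 1 < x := by
    have hCpos : (0 : ℝ) < (C : ℝ) + 1 := by positivity
    have h0 := tendsto_rpow_neg_atTop (show (0:ℝ) < 1 - α by linarith)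
    have h1 : ∀ᶠ x : ℝ in atTop, x ^ (-(1 - α)) < 1 / (8 * ((C : ℝ) + 1)) :=
      h0.eventually_lt_const (by positivity)
    filter_upwards [h1, eventually_ge_atTop (1 : ℝ),
      eventually_ge_atTop (8 * ((C : ℝ) + 1) + 10)] with x hx hx1 hx2
    have hx0 : (0 : ℝ) < x := by linarith
    have heq : x ^ α = x ^ (-(1 - α)) * x := by
      rw [← Real.rpow_add_one hx0.ne']
      ring_nf
    have h3 : x ^ α < 1 / (8 * ((C : ℝ) + 1)) * x := by
      rw [heq]
      exact mul_lt_mul_of_pos_right hx hx0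
    have h4 : 2 * ((C : ℝ) + 1) * x ^ α < 2 * ((C : ℝ) + 1) * (1 / (8 * ((C : ℝ) + 1)) * x) :=
      mul_lt_mul_of_pos_left h3 (by positivity)
    have h5 : 2 * ((C : ℝ) + 1) * (1 / (8 * ((C : ℝ) + 1)) * x) = x / 4 := by
      field_simp; ring
    rw [h5] at h4
    nlinarith [hx2, (Nat.cast_nonneg C : (0:ℝ) ≤ (C:ℝ))]
  -- Pick a large `n` in the infinite set.
  obtain ⟨b, hb⟩ := eventually_atTop.mp key
  obtain ⟨n, hnS, hn⟩ := hinf.exists_gt ⌈b⌉₊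
  have hnb : b ≤ (n : ℝ) := le_trans (Nat.le_ceil b) (by exact_mod_cast hn.le)
  have hbig : 2 * ((C : ℝ) + 1) * ((n : ℝ) ^ α + 2) + 1 < (n : ℝ) := hb _ hnb
  obtain ⟨hsub, hcard, hcol, hrb⟩ := hnS
  classical
  -- Missing set
  set M : Finset ℕ := Finset.Icc 1 n \ A n with hM
  have hAcard : (A n).card ≤ n := by
    calc (A n).card ≤ (Finset.Icc 1 n).card := Finset.card_le_card hsub
    _ = n := by simp
  have hMcard : (M.card : ℝ) ≤ (n : ℝ) ^ α := by
    have : M.card = n - (A n).card := by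
      rw [hM, Finset.card_sdiff_of_subset hsub]; simp
    have hcast : (M.card : ℝ) = (n : ℝ) - ((A n).card : ℝ) := by
      rw [this, Nat.cast_sub hAcard]
    linarith [hcard, hcast.le, hcast.ge]
  set half := n / 2 with hhalf
  set A' : Finset ℕ := (A n).filter (fun x => x ≤ half) with hA'
  -- Lower bound on A'
  have hlow : half ≤ A'.card + M.card := by
    have hsub2 : Finset.Icc 1 half ⊆ A' ∪ M := by
      intro x hx
      simp only [Finset.mem_Icc] at hx
      by_cases hxA : x ∈ A n
      · exact Finset.mem_union_left _ (by simp [hA', Finset.mem_filter, hxA, hx.2])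
      · refine Finset.mem_union_right _ ?_
        simp only [hM, Finset.mem_sdiff, Finset.mem_Icc]
        exact ⟨⟨hx.1, le_trans hx.2 (Nat.div_le_self n 2)⟩, hxA⟩
    calc half = (Finset.Icc 1 half).card := by simp
    _ ≤ (A' ∪ M).card := Finset.card_le_card hsub2
    _ ≤ A'.card + M.card := Finset.card_union_le _ _
  -- Each color fiber in A' has at most M.card + 1 elements.
  have hfiber : ∀ c : ℕ, ((A'.filter (fun x => χ n x = c)).card) ≤ M.card + 1 := by
    intro c
    set B := A'.filter (fun x => χ n x = c) with hB
    by_cases hBne : B.Nonempty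
    · set a := B.min' hBne with ha
      have haB : a ∈ B := B.min'_mem hBne
      have hmaps : ∀ x ∈ B.erase a, 2 * x - a ∈ M := by
        intro x hx
        obtain ⟨hxa, hxB⟩ := Finset.mem_erase.mp hx
        have hax : a < x := lt_of_le_of_ne (B.min'_le x hxB) (Ne.symm hxa)
        -- facts about a and x
        simp only [hB, hA', Finset.mem_filter] at haB hxB
        obtain ⟨⟨haA, hahalf⟩, hac⟩ := haB
        obtain ⟨⟨hxA, hxhalf⟩, hxc⟩ := hxB
        have hx1 : 1 ≤ x := (Finset.mem_Icc.mp (hsub hxA)).1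
        set d := x - a with hd
        have hd1 : 1 ≤ d := by omega
        have hxad : x = a + d := by omega
        have hnotin : a + 2 * d ∉ A n := by
          intro hin
          have := (hrb a d hd1 haA (by rwa [← hxad]) hin).1
          rw [← hxad] at this
          exact this (hac.trans hxc.symm)
        have h2x : 2 * x - a = a + 2 * d := by omega
        rw [h2x]
        simp only [hM, Finset.mem_sdiff, Finset.mem_Icc]
        refine ⟨⟨by omega, ?_⟩, hnotin⟩
        omega
      have hinj : Set.InjOn (fun x => 2 * x - a) (B.erase a) := by
        intro x hx y hy hxy
        simp only at hxy
        have hax : a < x := lt_of_le_of_ne (B.min'_le x (Finset.mem_of_mem_erase hx))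
          (Ne.symm (Finset.mem_erase.mp hx).1)
        have hay : a < y := lt_of_le_of_ne (B.min'_le y (Finset.mem_of_mem_erase hy))
          (Ne.symm (Finset.mem_erase.mp hy).1)
        omega
      have := Finset.card_le_card_of_injOn _ hmaps hinj
      have hBe : (B.erase a).card = B.card - 1 := Finset.card_erase_of_mem (B.min'_mem hBne)
      omega
    · simp [Finset.not_nonempty_iff_eq_empty.mp hBne]
  -- Sum over colors.
  have hA'card : A'.card ≤ C * (M.card + 1) := by
    have hmapsto : ∀ x ∈ A', χ n x ∈ (A n).image (χ n) := by
      intro x hx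
      exact Finset.mem_image_of_mem _ ((Finset.filter_subset _ _) hx)
    calc A'.card = ∑ c ∈ (A n).image (χ n), (A'.filter (fun x => χ n x = c)).card :=
          Finset.card_eq_sum_card_fiberwise hmapsto
    _ ≤ ∑ _c ∈ (A n).image (χ n), (M.card + 1) := Finset.sum_le_sum (fun c _ => hfiber c)
    _ = ((A n).image (χ n)).card * (M.card + 1) := by rw [Finset.sum_const, smul_eq_mul]
    _ ≤ C * (M.card + 1) := Nat.mul_le_mul_right _ hcol
  -- Combine in ℕ then ℝ.
  have hnat : n ≤ 2 * (C * (M.card + 1) + M.card) + 1 := by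
    have : half ≤ C * (M.card + 1) + M.card := le_trans hlow (by omega)
    omega
  have hreal : (n : ℝ) ≤ 2 * ((C : ℝ) * ((M.card : ℝ) + 1) + (M.card : ℝ)) + 1 := by
    exact_mod_cast hnat
  have hCnn : (0 : ℝ) ≤ (C : ℝ) := Nat.cast_nonneg C
  nlinarith [mul_le_mul_of_nonneg_left hMcard hCnn]
end
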